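/- arXiv:1501.01335 — 8 statements merged into one kernel-verified Lean document; each statement's English description precedes it below -/
import Mathlib

section
/- Let d be a natural number and α a real number such that either (d = 2 and 1 ≤ α ≤ 2) or (d ≥ 3 and 0 < α ≤ 2). Then for all real numbers a > 0 and b > 0, a^(d+α) ≥ ((d+α)/d)·a^d·b^α − (α/d)·b^(d+α) + (α/d)·b^(d+α−3)·(2a+b)·(a−b)². -/
lemma interp (t u q : ℝ) (ht : 0 < t) (hu : 0 ≤ u) (huq : u ≤ q) :
    t ^ u ≤ (1 - u / q) + (u / q) * t ^ q := by
  rcases eq_or_lt_of_le (hu.trans huq) with hq0 | hq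
  · have hu0 : u = 0 := le_antisymm (huq.trans_eq hq0.symm) hu
    simp [hu0, ← hq0]
  · have hθ0 : 0 ≤ u / q := div_nonneg hu hq.le
    have hθ1 : u / q ≤ 1 := div_le_one_of_le₀ huq hq.le
    have h := Real.geom_mean_le_arith_mean2_weighted (sub_nonneg.mpr hθ1) hθ0
      zero_le_one (Real.rpow_nonneg ht.le q) (by ring)
    rw [Real.one_rpow, one_mul, ← Real.rpow_mul ht.le, mul_div_cancel₀ _ (ne_of_gt hq),
      mul_one] at h
    exact h

lemma key_t (d : ℕ) (α t : ℝ)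
    (hd2 : (2:ℝ) ≤ (d:ℝ)) (hα0 : 0 < α) (hq1 : (1:ℝ) ≤ (d:ℝ) + α - 2)
    (ht : 0 < t) :
    t ^ ((d : ℝ) + α) ≥
      (((d : ℝ) + α) / d) * t ^ (d : ℝ) - α / d
        + (α / d) * (2 * t + 1) * (t - 1) ^ 2 := by
  have hd0 : (0:ℝ) < (d:ℝ) := by linarith
  have hq0 : (0:ℝ) < (d:ℝ) + α - 2 := by linarith
  have h1 := interp t ((d:ℝ) - 2) ((d:ℝ) + α - 2) ht (by linarith) (by linarith)
  have h2 := interp t 1 ((d:ℝ) + α - 2) ht zero_le_one hq1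
  rw [Real.rpow_one] at h2
  -- combine with weights (d+α)/d and 2α/d
  have c1 : (0:ℝ) ≤ ((d:ℝ) + α) / d := by positivity
  have c2 : (0:ℝ) ≤ 2 * α / d := by positivity
  have comb := add_le_add (mul_le_mul_of_nonneg_left h1 c1) (mul_le_mul_of_nonneg_left h2 c2)
  have hid : (((d:ℝ) + α) / d) * ((1 - ((d:ℝ) - 2) / ((d:ℝ) + α - 2))
        + (((d:ℝ) - 2) / ((d:ℝ) + α - 2)) * t ^ ((d:ℝ) + α - 2))
      + (2 * α / d) * ((1 - 1 / ((d:ℝ) + α - 2))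
        + (1 / ((d:ℝ) + α - 2)) * t ^ ((d:ℝ) + α - 2))
      = t ^ ((d:ℝ) + α - 2) + 3 * α / d := by
    field_simp
    ring
  rw [hid] at comb
  -- comb : ((d+α)/d) * t^(d-2) + (2α/d) * t ≤ t^(d+α-2) + 3α/d
  have ht2 : (0:ℝ) < t ^ (2:ℝ) := Real.rpow_pos_of_pos ht 2
  have H := mul_le_mul_of_nonneg_right comb ht2.le
  have e1 : t ^ ((d:ℝ) - 2) * t ^ (2:ℝ) = t ^ (d:ℝ) := by
    rw [← Real.rpow_add ht]; norm_num
  have e2 : t ^ ((d:ℝ) + α - 2) * t ^ (2:ℝ) = t ^ ((d:ℝ) + α) := by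
    rw [← Real.rpow_add ht]; norm_num
  have e3 : t ^ (2:ℝ) = t * t := by
    rw [show (2:ℝ) = (1:ℝ) + 1 by norm_num, Real.rpow_add ht, Real.rpow_one]
  have H2 : (((d:ℝ) + α) / d) * t ^ (d:ℝ) + (2 * α / d) * (t * (t * t))
      ≤ t ^ ((d:ℝ) + α) + 3 * α / d * (t * t) := by
    calc (((d:ℝ) + α) / d) * t ^ (d:ℝ) + (2 * α / d) * (t * (t * t))
        = ((((d:ℝ) + α) / d) * t ^ ((d:ℝ) - 2) + (2 * α / d) * t) * t ^ (2:ℝ) := by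
          rw [e3]; rw [show (((d:ℝ) + α) / d) * t ^ (d:ℝ) = (((d:ℝ) + α) / d) * (t ^ ((d:ℝ)-2) * t ^ (2:ℝ)) by rw [e1], e3]; ring
      _ ≤ (t ^ ((d:ℝ) + α - 2) + 3 * α / d) * t ^ (2:ℝ) := H
      _ = t ^ ((d:ℝ) + α) + 3 * α / d * (t * t) := by
          rw [add_mul, e2, e3]
  have expand : (((d:ℝ) + α) / d) * t ^ (d:ℝ) - α / d
      + (α / d) * (2 * t + 1) * (t - 1) ^ 2
      = (((d:ℝ) + α) / d) * t ^ (d:ℝ) + (2 * α / d) * (t * (t * t)) - 3 * α / d * (t * t) := by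
    ring
  rw [ge_iff_le, expand]
  linarith [H2]

/-- Lemma 3.1 (key inequality): for `d = 2, 1 ≤ α ≤ 2` or `d ≥ 3, 0 < α ≤ 2`,
and all `a, b > 0`,
`a^(d+α) ≥ ((d+α)/d)·a^d·b^α − (α/d)·b^(d+α) + (α/d)·b^(d+α−3)·(2a+b)·(a−b)²`. -/
theorem key_inequality (d : ℕ) (α a b : ℝ)
    (hdα : (d = 2 ∧ 1 ≤ α ∧ α ≤ 2) ∨ (3 ≤ d ∧ 0 < α ∧ α ≤ 2))
    (ha : 0 < a) (hb : 0 < b) :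
    a ^ ((d : ℝ) + α) ≥
      (((d : ℝ) + α) / d) * a ^ (d : ℝ) * b ^ α
        - (α / d) * b ^ ((d : ℝ) + α)
        + (α / d) * b ^ ((d : ℝ) + α - 3) * (2 * a + b) * (a - b) ^ 2 := by
  have hd2 : (2:ℝ) ≤ (d:ℝ) := by
    rcases hdα with ⟨hd, _⟩ | ⟨hd, _⟩
    · simp [hd]
    · have h3 : (3:ℝ) ≤ (d:ℝ) := by exact_mod_cast hd
      linarith
  have hα0 : 0 < α := by
    rcases hdα with ⟨_, h1, _⟩ | ⟨_, h0, _⟩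
    · linarith
    · exact h0
  have hq1 : (1:ℝ) ≤ (d:ℝ) + α - 2 := by
    rcases hdα with ⟨hd, h1, _⟩ | ⟨hd, h0, _⟩
    · subst hd; push_cast; linarith
    · have : (3:ℝ) ≤ (d:ℝ) := by exact_mod_cast hd
      linarith
  set t := a / b with htdef
  have ht : 0 < t := div_pos ha hb
  have key := key_t d α t hd2 hα0 hq1 ht
  -- multiply by b^(d+α)
  have hbp : (0:ℝ) < b ^ ((d:ℝ) + α) := Real.rpow_pos_of_pos hb _
  have H := mul_le_mul_of_nonneg_right key.le hbp.le
  -- rewrite each product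
  have et : ∀ x : ℝ, t ^ x * b ^ x = a ^ x := fun x => by
    rw [htdef, Real.div_rpow ha.le hb.le, div_mul_cancel₀]
    exact ne_of_gt (Real.rpow_pos_of_pos hb x)
  have eda : t ^ ((d:ℝ) + α) * b ^ ((d:ℝ) + α) = a ^ ((d:ℝ) + α) := et _
  have ebsplit : b ^ ((d:ℝ) + α) = b ^ (d:ℝ) * b ^ α := by
    rw [← Real.rpow_add hb]
  have ed : t ^ (d:ℝ) * b ^ ((d:ℝ) + α) = a ^ (d:ℝ) * b ^ α := by
    rw [ebsplit, ← mul_assoc, et]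
  have eb3 : b ^ ((d:ℝ) + α) = b ^ ((d:ℝ) + α - 3) * (b * (b * b)) := by
    have : b * (b * b) = b ^ (3:ℝ) := by
      rw [show (3:ℝ) = (1:ℝ) + (1 + 1) by norm_num, Real.rpow_add hb, Real.rpow_add hb,
        Real.rpow_one]
    rw [this, ← Real.rpow_add hb]
    norm_num
  have elast : (2 * t + 1) * (t - 1) ^ 2 * b ^ ((d:ℝ) + α)
      = b ^ ((d:ℝ) + α - 3) * (2 * a + b) * (a - b) ^ 2 := by
    rw [eb3, htdef]
    have hb0 : b ≠ 0 := ne_of_gt hb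
    field_simp
  rw [ge_iff_le, ← eda]
  refine le_trans (le_of_eq ?_) H
  linear_combination (-(((d:ℝ) + α) / d)) * ed - (α / (d:ℝ)) * elast
end

section
/- Let d ≥ 3 be a natural number and α a real number with 0 < α ≤ 2. Then for all real x ≥ 0, the function h(x) = d·x^(d+α) − (d+α)·x^d + α − α·(2x+1)·(x−1)² satisfies h(x) ≥ 0. -/
lemma qaux (m : ℕ) (x : ℝ) (hx : 0 ≤ x) :
    0 ≤ ((m:ℝ)+2)*x^(m+3) - ((m:ℝ)+3)*x^(m+2) - 2*x^3 + 3*x^2 := by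
  induction m with
  | zero =>
      have : ((0:ℕ):ℝ) = 0 := by norm_num
      rw [this]
      have h : ((0:ℝ)+2)*x^(0+3) - ((0:ℝ)+3)*x^(0+2) - 2*x^3 + 3*x^2 = 0 := by ring
      linarith
  | succ n ih =>
      have hpow : (0:ℝ) ≤ x^(n+2) := pow_nonneg hx _
      have hprod : 0 ≤ ((n:ℝ)+3) * x^(n+2) * (x-1)^2 := by positivity
      push_cast
      have hid : ((n:ℝ)+1+2)*x^(n+1+3) - ((n:ℝ)+1+3)*x^(n+1+2) - 2*x^3 + 3*x^2
          = (((n:ℝ)+2)*x^(n+3) - ((n:ℝ)+3)*x^(n+2) - 2*x^3 + 3*x^2)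
            + ((n:ℝ)+3) * x^(n+2) * (x-1)^2 := by ring
      rw [hid]
      linarith

/-- For `d ≥ 3` and `0 < α ≤ 2`, the function
`h(x) = d·x^(d+α) − (d+α)·x^d + α − α·(2x+1)·(x−1)²` is nonnegative for `x ≥ 0`. -/
theorem h_nonneg (d : ℕ) (α : ℝ) (hd : 3 ≤ d) (hα : 0 < α) (hα2 : α ≤ 2) :
    ∀ x : ℝ, 0 ≤ x →
      0 ≤ (d : ℝ) * x ^ ((d : ℝ) + α) - ((d : ℝ) + α) * x ^ (d : ℝ) + α
            - α * (2 * x + 1) * (x - 1) ^ 2 := by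
  intro x hx
  rcases hx.eq_or_lt with h0 | hxpos
  · rw [← h0]
    have h1 : (0:ℝ) ^ ((d : ℝ) + α) = 0 := by
      apply Real.zero_rpow; positivity
    have h2 : (0:ℝ) ^ ((d : ℝ)) = 0 := by
      apply Real.zero_rpow
      exact_mod_cast Nat.cast_ne_zero.mpr (show d ≠ 0 by omega)
    rw [h1, h2]
    norm_num
  · obtain ⟨m, rfl⟩ : ∃ m, d = m + 3 := ⟨d - 3, by omega⟩
    have h1 : 1 + α * Real.log x ≤ x ^ α := by
      rw [Real.rpow_def_of_pos hxpos α, mul_comm (Real.log x) α]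
      linarith [Real.add_one_le_exp (α * Real.log x)]
    have hL : 1 - 1/x ≤ Real.log x := by
      have h := Real.log_le_sub_one_of_pos (show 0 < 1/x by positivity)
      rw [one_div, Real.log_inv] at h
      rw [one_div]
      linarith
    have hxL : x - 1 ≤ x * Real.log x := by
      have h := mul_le_mul_of_nonneg_left hL (le_of_lt hxpos)
      have hxx : x * (1 - 1/x) = x - 1 := by field_simp
      rw [hxx] at h
      linarith
    have hq := qaux m x hx
    have hrw : x ^ (((m+3 : ℕ) : ℝ) + α) = x^(m+3) * x^α := by
      rw [Real.rpow_add hxpos, Real.rpow_natCast]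
    have hrw2 : x ^ (((m+3:ℕ)):ℝ) = x^(m+3) := Real.rpow_natCast x (m+3)
    rw [hrw, hrw2]
    have hxd : (0:ℝ) < x^(m+2) := pow_pos hxpos _
    have key : x^(m+2) * (x - 1) ≤ x^(m+2) * (x * Real.log x) :=
      mul_le_mul_of_nonneg_left hxL hxd.le
    have e1 : 0 ≤ α * (((m:ℝ)+2)*x^(m+3) - ((m:ℝ)+3)*x^(m+2) - 2*x^3 + 3*x^2) :=
      mul_nonneg hα.le hq
    have e2 : 0 ≤ α*((m:ℝ)+3) * (x^(m+3)*Real.log x - x^(m+2)*(x-1)) := by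
      apply mul_nonneg (by positivity)
      have hid : x^(m+3)*Real.log x = x^(m+2)*(x*Real.log x) := by ring
      rw [hid]
      linarith
    have e3 : 0 ≤ ((m:ℝ)+3)*x^(m+3) * (x^α - (1 + α*Real.log x)) := by
      apply mul_nonneg (by positivity)
      linarith
    push_cast
    have hidG : ((m:ℝ) + 3) * (x ^ (m + 3) * x ^ α) - ((m:ℝ) + 3 + α) * x ^ (m + 3) + α
          - α * (2 * x + 1) * (x - 1) ^ 2
        = α * (((m:ℝ)+2)*x^(m+3) - ((m:ℝ)+3)*x^(m+2) - 2*x^3 + 3*x^2)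
          + α*((m:ℝ)+3) * (x^(m+3)*Real.log x - x^(m+2)*(x-1))
          + ((m:ℝ)+3)*x^(m+3) * (x^α - (1 + α*Real.log x)) := by ring
    linarith [hidG, e1, e2, e3]
end

section
/- Let d ≥ 1, let Ω ⊂ ℝ^d be a measurable set with finite Lebesgue measure |Ω| and with I := ∫_Ω |z|² dz < ∞, and let φ_1, …, φ_k be an orthonormal family in L²(ℝ^d) with each φ_j vanishing almost everywhere outside Ω. Then the function Φ_k(μ) := Σ_{j=1}^k |φ̂_j(μ)|² satisfies, for every μ ∈ ℝ^d, |∇Φ_k(μ)| ≤ 2(2π)^{−d} √(|Ω|·I). -/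
open MeasureTheory ComplexConjugate


lemma exp_I_sub_one (t : ℝ) : ‖Complex.exp (↑t * Complex.I) - 1‖ ≤ |t| := by
  have h1 : ‖Complex.exp (↑t * Complex.I) - 1‖ ^ 2 = 2 - 2 * Real.cos t := by
    rw [Complex.sq_norm, Complex.normSq_apply]
    have := Real.sin_sq_add_cos_sq t
    simp only [Complex.sub_re, Complex.sub_im, Complex.exp_ofReal_mul_I_re,
      Complex.exp_ofReal_mul_I_im, Complex.one_re, Complex.one_im]
    nlinarith [this]
  have h2 : Real.cos t = 1 - 2 * Real.sin (t/2) ^ 2 := by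
    have := Real.cos_two_mul' (t/2)
    rw [show 2*(t/2) = t by ring, Real.cos_sq'] at this
    linarith
  have h3 : Real.sin (t/2)^2 ≤ (t/2)^2 := Real.sin_sq_le_sq
  have h4 : ‖Complex.exp (↑t * Complex.I) - 1‖ ^ 2 ≤ |t|^2 := by
    rw [h1, sq_abs]; nlinarith
  nlinarith [norm_nonneg (Complex.exp (↑t * Complex.I) - 1), abs_nonneg t]

lemma exp_I_sub_exp_I (a b : ℝ) :
    ‖Complex.exp (↑a * Complex.I) - Complex.exp (↑b * Complex.I)‖ ≤ |a - b| := by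
  have h : Complex.exp (↑a * Complex.I) - Complex.exp (↑b * Complex.I)
      = Complex.exp (↑b * Complex.I) * (Complex.exp (↑(a - b) * Complex.I) - 1) := by
    rw [mul_sub, ← Complex.exp_add, mul_one]
    push_cast
    ring_nf
  rw [h, norm_mul, Complex.norm_exp_ofReal_mul_I, one_mul]
  exact exp_I_sub_one _


noncomputable def fourierHat {d : ℕ} (f : EuclideanSpace ℝ (Fin d) → ℂ)
    (μ : EuclideanSpace ℝ (Fin d)) : ℂ :=
  (((2 * Real.pi) ^ (-(d : ℝ) / 2) : ℝ) : ℂ) *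
    ∫ z : EuclideanSpace ℝ (Fin d),
      Complex.exp (-(Complex.I * ((inner ℝ μ z : ℝ) : ℂ))) * f z

set_option maxHeartbeats 1000000 in
/-- If `φ_1, …, φ_k` is an orthonormal family in `L²(ℝ^d)`, each `φ_j` vanishing
a.e. outside a measurable set `Ω` of finite measure with `I = ∫_Ω |z|² dz < ∞`,
then `Φ_k(μ) = Σ_j |φ̂_j(μ)|²` satisfies `|∇Φ_k(μ)| ≤ 2(2π)^{−d} √(|Ω|·I)`
for every `μ`. -/
theorem grad_Phi_upper_bound (d k : ℕ) (hd : 1 ≤ d)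
    (Ω : Set (EuclideanSpace ℝ (Fin d)))
    (hΩmeas : MeasurableSet Ω) (hΩfin : volume Ω < ⊤)
    (hΩI : IntegrableOn (fun z => ‖z‖ ^ 2) Ω volume)
    (φ : Fin k → EuclideanSpace ℝ (Fin d) → ℂ)
    (hL2 : ∀ j, MemLp (φ j) 2 volume)
    (hsupp : ∀ j, ∀ᵐ z ∂volume, z ∉ Ω → φ j z = 0)
    (horth : ∀ i j, (∫ z, conj (φ i z) * φ j z) = if i = j then 1 else 0) :
    ∀ μ, ‖gradient (fun ν => ∑ j, ‖fourierHat (φ j) ν‖ ^ 2) μ‖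
      ≤ 2 * ((2 * Real.pi) ^ d)⁻¹ *
          Real.sqrt ((volume Ω).toReal * ∫ z in Ω, ‖z‖ ^ 2) := by
  intro μ₀
  classical
  set c : ℝ := (2 * Real.pi) ^ (-(d : ℝ) / 2) with hc
  have hπ : (0:ℝ) < 2 * Real.pi := by positivity
  have hc0 : 0 ≤ c := Real.rpow_nonneg hπ.le _
  have hcsq : c ^ 2 = ((2 * Real.pi) ^ d)⁻¹ := by
    rw [hc, ← Real.rpow_natCast ((2*Real.pi) ^ (-(d:ℝ)/2)) 2, ← Real.rpow_mul hπ.le]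
    rw [show (-(d:ℝ)/2) * (2:ℕ) = -(d:ℝ) by push_cast; ring]
    rw [Real.rpow_neg hπ.le, Real.rpow_natCast]
  set I : ℝ := ∫ z in Ω, ‖z‖ ^ 2 with hIdef
  have hI0 : 0 ≤ I := setIntegral_nonneg hΩmeas (fun z _ => sq_nonneg _)
  set volΩ : ℝ := (volume Ω).toReal with hvol
  have hvol0 : 0 ≤ volΩ := ENNReal.toReal_nonneg
  -- the comparison functions
  set g : EuclideanSpace ℝ (Fin d) → EuclideanSpace ℝ (Fin d) → ℂ :=
    fun ξ z => (c:ℂ) * Complex.exp (((inner ℝ ξ z : ℝ) : ℂ) * Complex.I) with hg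
  have hgm : ∀ ξ, MemLp (Ω.indicator (g ξ)) 2 volume := by
    intro ξ
    have hcont : Continuous (g ξ) := by
      apply continuous_const.mul
      exact Complex.continuous_exp.comp
        ((Complex.continuous_ofReal.comp (continuous_const.inner continuous_id)).mul
          continuous_const)
    refine MemLp.of_le (memLp_indicator_const 2 hΩmeas ((c:ℂ)) (Or.inr hΩfin.ne))
      (hcont.aestronglyMeasurable.indicator hΩmeas)
      (Filter.Eventually.of_forall fun z => ?_)
    by_cases hz : z ∈ Ω
    · rw [Set.indicator_of_mem hz, Set.indicator_of_mem hz, hg]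
      simp only [norm_mul, Complex.norm_exp_ofReal_mul_I, mul_one, le_refl]
    · simp [Set.indicator_of_notMem hz]
  set G : EuclideanSpace ℝ (Fin d) → Lp ℂ 2 (volume : Measure (EuclideanSpace ℝ (Fin d))) :=
    fun ξ => (hgm ξ).toLp _ with hG
  set f : Fin k → Lp ℂ 2 (volume : Measure (EuclideanSpace ℝ (Fin d))) :=
    fun j => (hL2 j).toLp _ with hf
  have horthf : Orthonormal ℂ f := by
    rw [orthonormal_iff_ite]
    intro i j
    rw [MeasureTheory.L2.inner_def, ← horth i j]
    apply integral_congr_ae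
    filter_upwards [MemLp.coeFn_toLp (hL2 i), MemLp.coeFn_toLp (hL2 j)] with z h1 h2
    simp [hf, h1, h2, RCLike.inner_apply, mul_comm]
  have hinner : ∀ ξ j, (inner ℂ (G ξ) (f j) : ℂ) = fourierHat (φ j) ξ := by
    intro ξ j
    rw [MeasureTheory.L2.inner_def]
    have hae : ∀ᵐ z ∂volume, (inner ℂ ((G ξ : _ → ℂ) z) ((f j : _ → ℂ) z) : ℂ)
        = (c:ℂ) * (Complex.exp (-(Complex.I * ((inner ℝ ξ z : ℝ):ℂ))) * φ j z) := by
      filter_upwards [MemLp.coeFn_toLp (hgm ξ), MemLp.coeFn_toLp (hL2 j), hsupp j]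
        with z h1 h2 h3
      rw [RCLike.inner_apply, hG, hf]
      simp only
      rw [h1, h2]
      by_cases hz : z ∈ Ω
      · rw [Set.indicator_of_mem hz]
        rw [hg]
        simp only [map_mul, Complex.conj_ofReal, ← Complex.exp_conj, Complex.conj_I]
        ring_nf
      · rw [Set.indicator_of_notMem hz, h3 hz]
        simp
    rw [integral_congr_ae hae, MeasureTheory.integral_const_mul]
    rfl
  have hnorm_bound : ∀ (x : Lp ℂ 2 (volume : Measure (EuclideanSpace ℝ (Fin d))))
      (u : EuclideanSpace ℝ (Fin d) → ℂ) (b : EuclideanSpace ℝ (Fin d) → ℝ),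
      (∀ᵐ z ∂volume, (x : _ → ℂ) z = Ω.indicator u z) → IntegrableOn b Ω volume →
      (∀ z ∈ Ω, ‖u z‖^2 ≤ b z) → ‖x‖^2 ≤ ∫ z in Ω, b z := by
    intro x u b hx hb hub
    have h1 : ‖x‖ ^ 2 = RCLike.re (inner ℂ x x) := norm_sq_eq_re_inner (𝕜 := ℂ) x
    rw [h1, MeasureTheory.L2.inner_def, ← integral_re (L2.integrable_inner x x)]
    have h2 : ∫ z, RCLike.re (inner ℂ ((x : _ → ℂ) z) ((x : _ → ℂ) z) : ℂ) ∂volume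
        = ∫ z, ‖(x : _ → ℂ) z‖^2 ∂volume := by
      apply integral_congr_ae
      filter_upwards with z
      rw [← norm_sq_eq_re_inner (𝕜 := ℂ)]
    rw [h2, ← integral_indicator hΩmeas]
    apply integral_mono_of_nonneg
    · exact Filter.Eventually.of_forall fun z => sq_nonneg _
    · exact hb.integrable_indicator hΩmeas
    · filter_upwards [hx] with z hz
      rw [hz]
      by_cases h : z ∈ Ω
      · rw [Set.indicator_of_mem h, Set.indicator_of_mem h]; exact hub z h
      · rw [Set.indicator_of_notMem h, Set.indicator_of_notMem h]; simp
  have hGnorm : ∀ ξ, ‖G ξ‖^2 ≤ c^2 * volΩ := by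
    intro ξ
    have key := hnorm_bound (G ξ) (g ξ) (fun _ => c^2) (MemLp.coeFn_toLp _)
      (integrableOn_const hΩfin.ne) ?_
    · rw [setIntegral_const] at key
      simpa [smul_eq_mul, mul_comm, Measure.real, hvol] using key
    · intro z hz
      rw [hg]
      simp only [norm_mul, Complex.norm_exp_ofReal_mul_I, mul_one, Complex.norm_real,
        Real.norm_eq_abs, abs_of_nonneg hc0, le_refl]
  have hGdiff : ∀ ξ ζ, ‖G ξ - G ζ‖^2 ≤ c^2 * ‖ξ - ζ‖^2 * I := by
    intro ξ ζ
    have hcoe : ∀ᵐ z ∂volume, ((G ξ - G ζ : Lp ℂ 2 _) : _ → ℂ) z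
        = Ω.indicator (fun z => g ξ z - g ζ z) z := by
      filter_upwards [Lp.coeFn_sub (G ξ) (G ζ), MemLp.coeFn_toLp (hgm ξ),
        MemLp.coeFn_toLp (hgm ζ)] with z h1 h2 h3
      rw [h1, Pi.sub_apply, h2, h3]
      by_cases h : z ∈ Ω <;> simp [h]
    have key := hnorm_bound _ _ (fun z => c^2 * ‖ξ - ζ‖^2 * ‖z‖^2) hcoe
      (hΩI.const_mul (c^2 * ‖ξ - ζ‖^2)) ?_
    · rw [MeasureTheory.integral_const_mul] at key
      calc ‖G ξ - G ζ‖^2 ≤ _ := key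
        _ = c^2 * ‖ξ - ζ‖^2 * I := by rw [hIdef]
    · intro z hz
      have h1 : ‖g ξ z - g ζ z‖ ≤ c * (‖ξ - ζ‖ * ‖z‖) := by
        rw [show g ξ z - g ζ z = (c:ℂ) * (Complex.exp (((inner ℝ ξ z : ℝ):ℂ) * Complex.I)
            - Complex.exp (((inner ℝ ζ z : ℝ):ℂ) * Complex.I)) by rw [hg]; ring]
        rw [norm_mul, Complex.norm_real, Real.norm_eq_abs, abs_of_nonneg hc0]
        refine mul_le_mul_of_nonneg_left ?_ hc0
        calc ‖_ - _‖ ≤ |(inner ℝ ξ z : ℝ) - (inner ℝ ζ z : ℝ)| := exp_I_sub_exp_I _ _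
          _ = |(inner ℝ (ξ - ζ) z : ℝ)| := by rw [inner_sub_left]
          _ ≤ ‖ξ - ζ‖ * ‖z‖ := abs_real_inner_le_norm _ _
      calc ‖g ξ z - g ζ z‖^2 ≤ (c * (‖ξ - ζ‖ * ‖z‖))^2 :=
            pow_le_pow_left₀ (norm_nonneg _) h1 2
        _ = c^2 * ‖ξ - ζ‖^2 * ‖z‖^2 := by ring
  have bessel : ∀ x : Lp ℂ 2 (volume : Measure (EuclideanSpace ℝ (Fin d))),
      ∑ j : Fin k, ‖(inner ℂ x (f j) : ℂ)‖^2 ≤ ‖x‖^2 := by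
    intro x
    have h := horthf.sum_inner_products_le (s := Finset.univ) x
    calc ∑ j : Fin k, ‖(inner ℂ x (f j) : ℂ)‖^2
        = ∑ j : Fin k, ‖(inner ℂ (f j) x : ℂ)‖^2 := by
          simp_rw [norm_inner_symm]
      _ ≤ ‖x‖^2 := h
  set L : ℝ := 2 * ((2 * Real.pi) ^ d)⁻¹ * Real.sqrt (volΩ * I) with hL
  have hL0 : 0 ≤ L := by positivity
  have lip : ∀ ν, |(∑ j : Fin k, ‖fourierHat (φ j) ν‖^2)
      - ∑ j : Fin k, ‖fourierHat (φ j) μ₀‖^2| ≤ L * ‖ν - μ₀‖ := by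
    intro ν
    set a : Fin k → ℝ := fun j => ‖fourierHat (φ j) ν‖ with ha
    set b : Fin k → ℝ := fun j => ‖fourierHat (φ j) μ₀‖ with hb
    have hFsub : ∀ j : Fin k, fourierHat (φ j) ν - fourierHat (φ j) μ₀
        = (inner ℂ (G ν - G μ₀) (f j) : ℂ) := by
      intro j; rw [inner_sub_left, hinner, hinner]
    have s1 : ∑ j : Fin k, (a j - b j)^2 ≤ c^2 * ‖ν - μ₀‖^2 * I := by
      refine le_trans ?_ ((bessel (G ν - G μ₀)).trans (hGdiff ν μ₀))
      apply Finset.sum_le_sum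
      intro j _
      rw [← hFsub j]
      have h := abs_norm_sub_norm_le (fourierHat (φ j) ν) (fourierHat (φ j) μ₀)
      calc (a j - b j)^2 = |a j - b j|^2 := (sq_abs _).symm
        _ ≤ ‖fourierHat (φ j) ν - fourierHat (φ j) μ₀‖^2 :=
            pow_le_pow_left₀ (abs_nonneg _) h 2
    have b1 : ∑ j : Fin k, (a j)^2 ≤ c^2 * volΩ := by
      refine le_trans (le_of_eq ?_) ((bessel (G ν)).trans (hGnorm ν))
      exact Finset.sum_congr rfl fun j _ => by simp only [ha, hinner]
    have b2 : ∑ j : Fin k, (b j)^2 ≤ c^2 * volΩ := by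
      refine le_trans (le_of_eq ?_) ((bessel (G μ₀)).trans (hGnorm μ₀))
      exact Finset.sum_congr rfl fun j _ => by simp only [hb, hinner]
    have s2 : ∑ j : Fin k, (a j + b j)^2 ≤ 4 * (c^2 * volΩ) := by
      calc ∑ j : Fin k, (a j + b j)^2 ≤ ∑ j : Fin k, (2*(a j)^2 + 2*(b j)^2) :=
            Finset.sum_le_sum fun j _ => by nlinarith [sq_nonneg (a j - b j)]
        _ = 2*∑ j : Fin k, (a j)^2 + 2*∑ j : Fin k, (b j)^2 := by
            rw [Finset.sum_add_distrib, Finset.mul_sum, Finset.mul_sum]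
        _ ≤ 4 * (c^2 * volΩ) := by linarith
    have cs : (∑ j : Fin k, (a j - b j) * (a j + b j))^2
        ≤ (∑ j : Fin k, (a j - b j)^2) * (∑ j : Fin k, (a j + b j)^2) :=
      Finset.sum_mul_sq_le_sq_mul_sq Finset.univ (fun j => a j - b j) (fun j => a j + b j)
    have habs : |∑ j : Fin k, (a j - b j) * (a j + b j)| ≤
        Real.sqrt (c^2*‖ν-μ₀‖^2*I) * Real.sqrt (4*(c^2*volΩ)) := by
      rw [← Real.sqrt_sq_eq_abs,
        ← Real.sqrt_mul (mul_nonneg (mul_nonneg (sq_nonneg c) (sq_nonneg _)) hI0) (4*(c^2*volΩ))]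
      apply Real.sqrt_le_sqrt
      refine le_trans cs (mul_le_mul s1 s2
        (Finset.sum_nonneg fun j _ => sq_nonneg _)
        (mul_nonneg (mul_nonneg (sq_nonneg c) (sq_nonneg _)) hI0))
    have hfinal : Real.sqrt (c^2*‖ν-μ₀‖^2*I) * Real.sqrt (4*(c^2*volΩ)) = L * ‖ν - μ₀‖ := by
      rw [show c^2*‖ν-μ₀‖^2*I = (c*‖ν-μ₀‖)^2 * I by ring,
        show 4*(c^2*volΩ) = (2*c)^2 * volΩ by ring,
        Real.sqrt_mul (by positivity), Real.sqrt_mul (by positivity),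
        Real.sqrt_sq (by positivity), Real.sqrt_sq (by positivity),
        hL, ← hcsq, Real.sqrt_mul hvol0 I]
      ring
    have e1 : (∑ j : Fin k, ‖fourierHat (φ j) ν‖^2) - ∑ j : Fin k, ‖fourierHat (φ j) μ₀‖^2
        = ∑ j : Fin k, (a j - b j) * (a j + b j) := by
      rw [← Finset.sum_sub_distrib]
      exact Finset.sum_congr rfl fun j _ => by simp only [ha, hb]; ring
    rw [e1]
    exact le_trans habs (le_of_eq hfinal)
  have hkey : ‖fderiv ℝ (fun ν => ∑ j : Fin k, ‖fourierHat (φ j) ν‖ ^ 2) μ₀‖ ≤ L :=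
    norm_fderiv_le_of_lip' ℝ hL0 (Filter.Eventually.of_forall fun ν => by
      rw [Real.norm_eq_abs]
      exact lip ν)
  have hgrad : ‖gradient (fun ν => ∑ j : Fin k, ‖fourierHat (φ j) ν‖ ^ 2) μ₀‖
      = ‖fderiv ℝ (fun ν => ∑ j : Fin k, ‖fourierHat (φ j) ν‖ ^ 2) μ₀‖ := by
    unfold gradient
    exact LinearIsometryEquiv.norm_map _ _
  rw [hgrad]
  exact hkey
end

section
/- Let d ≥ 1 and let Ω ⊂ ℝ^d be a measurable set with 0 < |Ω| < ∞. Then for every y ∈ ℝ^d, ∫_Ω |z − y|² dz ≥ (d/(d+2)) · ω_d^{−2/d} · |Ω|^{(d+2)/d}, where ω_d = π^{d/2}/Γ(1 + d/2) is the volume of the unit ball in ℝ^d. -/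
open MeasureTheory Metric Set
open scoped ENNReal

/-- Lower bound on the moment of inertia: if `Ω ⊂ ℝ^d` is measurable with
`0 < |Ω| < ∞`, then for every `y`,
`∫_Ω |z − y|² dz ≥ (d/(d+2))·ω_d^{−2/d}·|Ω|^{(d+2)/d}`, where
`ω_d = π^{d/2}/Γ(1+d/2)` is the volume of the unit ball (the integral on the left
is allowed to be `+∞`). -/
theorem moment_of_inertia_lower_bound (d : ℕ) (hd : 1 ≤ d)
    (Ω : Set (EuclideanSpace ℝ (Fin d)))
    (hΩmeas : MeasurableSet Ω) (hΩpos : 0 < volume Ω) (hΩfin : volume Ω < ⊤)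
    (y : EuclideanSpace ℝ (Fin d)) :
    ENNReal.ofReal (((d : ℝ) / ((d : ℝ) + 2)) *
        (Real.pi ^ ((d : ℝ) / 2) / Real.Gamma (1 + (d : ℝ) / 2)) ^ (-(2 : ℝ) / (d : ℝ)) *
        (volume Ω).toReal ^ (((d : ℝ) + 2) / (d : ℝ)))
      ≤ ∫⁻ z in Ω, ENNReal.ofReal (‖z - y‖ ^ 2) := by
  haveI : Nonempty (Fin d) := ⟨⟨0, hd⟩⟩

  set ω : ℝ := Real.sqrt Real.pi ^ d / Real.Gamma ((d : ℝ) / 2 + 1) with hω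
  have hωpos : 0 < ω := div_pos (pow_pos (Real.sqrt_pos.2 Real.pi_pos) d)
    (Real.Gamma_pos_of_pos (by positivity))
  set m : ℝ := (volume Ω).toReal with hm
  have hmpos : 0 < m := ENNReal.toReal_pos hΩpos.ne' hΩfin.ne
  have hd0 : (0:ℝ) < d := by exact_mod_cast hd
  set r : ℝ := (m / ω) ^ ((1:ℝ)/d) with hr
  have hmω : 0 < m / ω := div_pos hmpos hωpos
  have hrpos : 0 < r := Real.rpow_pos_of_pos hmω _
  have hrd : r ^ d = m / ω := by
    rw [hr, ← Real.rpow_natCast ((m/ω) ^ ((1:ℝ)/d)) d, ← Real.rpow_mul hmω.le,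
      one_div_mul_cancel hd0.ne', Real.rpow_one]
  set B := closedBall y r with hBdef
  have hBmeas : MeasurableSet B := measurableSet_closedBall
  have hBvol : volume B = volume Ω := by
    rw [hBdef, EuclideanSpace.volume_closedBall, Fintype.card_fin,
      ← ENNReal.ofReal_pow hrpos.le, ← ENNReal.ofReal_mul (by positivity), hrd,
      div_mul_cancel₀ _ hωpos.ne']
    exact ENNReal.ofReal_toReal hΩfin.ne
  set f : EuclideanSpace ℝ (Fin d) → ℝ≥0∞ := fun z => ENNReal.ofReal (‖z - y‖ ^ 2) with hf
  -- equal measures of the two "difference" pieces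
  have hdiffeq : volume (B \ Ω) = volume (Ω \ B) := by
    have h1 := measure_inter_add_diff (μ := volume) B hΩmeas
    have h2 := measure_inter_add_diff (μ := volume) Ω hBmeas
    rw [inter_comm Ω B] at h2
    have hfin : volume (B ∩ Ω) ≠ ⊤ :=
      (lt_of_le_of_lt (measure_mono inter_subset_right) hΩfin).ne
    have : volume (B ∩ Ω) + volume (B \ Ω) = volume (B ∩ Ω) + volume (Ω \ B) := by
      rw [h1, h2, hBvol]
    exact (ENNReal.add_right_inj hfin).1 this
  -- Step 1: bathtub principle
  have hstep1 : ∫⁻ z in B, f z ≤ ∫⁻ z in Ω, f z := by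
    rw [← lintegral_inter_add_diff f B hΩmeas, ← lintegral_inter_add_diff f Ω hBmeas,
      inter_comm Ω B]
    refine add_le_add le_rfl ?_
    calc ∫⁻ z in B \ Ω, f z ≤ ∫⁻ _z in B \ Ω, ENNReal.ofReal (r ^ 2) := by
          refine setLIntegral_mono' (hBmeas.diff hΩmeas) fun z hz => ?_
          refine ENNReal.ofReal_le_ofReal ?_
          have h : ‖z - y‖ ≤ r := by
            have := hz.1; rw [hBdef, mem_closedBall, dist_eq_norm] at this; exact this
          exact pow_le_pow_left₀ (norm_nonneg _) h 2
      _ = ENNReal.ofReal (r ^ 2) * volume (B \ Ω) := setLIntegral_const _ _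
      _ = ENNReal.ofReal (r ^ 2) * volume (Ω \ B) := by rw [hdiffeq]
      _ = ∫⁻ _z in Ω \ B, ENNReal.ofReal (r ^ 2) := (setLIntegral_const _ _).symm
      _ ≤ ∫⁻ z in Ω \ B, f z := by
          refine setLIntegral_mono' (hΩmeas.diff hBmeas) fun z hz => ?_
          refine ENNReal.ofReal_le_ofReal ?_
          have h : r ≤ ‖z - y‖ := by
            have := hz.2
            rw [hBdef, mem_closedBall, dist_eq_norm, not_le] at this
            exact this.le
          exact pow_le_pow_left₀ hrpos.le h 2
  -- Step 2: compute the integral over the ball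
  have hcont : Continuous fun z : EuclideanSpace ℝ (Fin d) => ‖z - y‖ ^ 2 := by fun_prop
  have hint : IntegrableOn (fun z : EuclideanSpace ℝ (Fin d) => ‖z - y‖ ^ 2) B :=
    hcont.continuousOn.integrableOn_compact (isCompact_closedBall y r)
  have hωball : (volume (ball (0 : EuclideanSpace ℝ (Fin d)) 1)).toReal = ω := by
    rw [EuclideanSpace.volume_ball, Fintype.card_fin]
    simp [ENNReal.toReal_ofReal hωpos.le, hω]
    exact div_nonneg (by positivity) (Real.Gamma_pos_of_pos (by positivity)).le
  set F : ℝ → ℝ := fun t => if t ≤ r then t ^ 2 else 0 with hF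
  have hreal : ∫ z in B, ‖z - y‖ ^ 2 = (d / ((d:ℝ) + 2)) * ω * r ^ (d + 2) := by
    have h1 : ∫ z in B, ‖z - y‖ ^ 2 = ∫ z : EuclideanSpace ℝ (Fin d), F ‖z - y‖ := by
      rw [← integral_indicator hBmeas]
      refine integral_congr_ae (ae_of_all _ fun z => ?_)
      by_cases hz : z ∈ B
      · rw [indicator_of_mem hz]
        rw [hBdef, mem_closedBall, dist_eq_norm] at hz
        simp [hF, hz]
      · rw [indicator_of_notMem hz]
        rw [hBdef, mem_closedBall, dist_eq_norm] at hz
        simp [hF, if_neg hz]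
    have h2 : ∫ z : EuclideanSpace ℝ (Fin d), F ‖z - y‖ = ∫ z : EuclideanSpace ℝ (Fin d), F ‖z‖ := by
      exact integral_sub_right_eq_self (fun z : EuclideanSpace ℝ (Fin d) => F ‖z‖) y
    have h3 := integral_fun_norm_addHaar (volume : Measure (EuclideanSpace ℝ (Fin d))) F
    have hdim : Module.finrank ℝ (EuclideanSpace ℝ (Fin d)) = d := finrank_euclideanSpace_fin
    rw [hdim] at h3
    have h4 : ∫ t in Ioi (0:ℝ), t ^ (d - 1) • F t = r ^ (d + 2) / ((d:ℝ) + 2) := by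
      have heq : ∀ t ∈ Ioi (0:ℝ),
          t ^ (d - 1) • F t = (Ioc (0:ℝ) r).indicator (fun t => t ^ (d + 1)) t := by
        intro t ht
        by_cases htr : t ≤ r
        · rw [indicator_of_mem (show t ∈ Ioc (0:ℝ) r from ⟨ht, htr⟩)]
          simp only [hF, if_pos htr, smul_eq_mul, ← pow_add]
          congr 1
          omega
        · rw [indicator_of_notMem (by simp [Set.mem_Ioc, htr])]
          simp [hF, if_neg htr]
      rw [setIntegral_congr_fun measurableSet_Ioi heq,
        setIntegral_indicator measurableSet_Ioc]
      have : Ioi (0:ℝ) ∩ Ioc (0:ℝ) r = Ioc 0 r := by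
        rw [inter_eq_right]; exact Ioc_subset_Ioi_self
      rw [this, ← intervalIntegral.integral_of_le hrpos.le, integral_pow]
      push_cast
      ring
    rw [h1, h2, h3, h4, measureReal_def, hωball, nsmul_eq_mul, smul_eq_mul]
    field_simp
  have hcomp : ∫⁻ z in B, f z
      = ENNReal.ofReal ((d / ((d:ℝ) + 2)) * ω * r ^ (d + 2)) := by
    rw [hf, ← ofReal_integral_eq_lintegral_ofReal hint
      (ae_of_all _ fun z => sq_nonneg _), hreal]
  -- Step 3: arithmetic
  have e1 : Real.pi ^ ((d : ℝ) / 2) / Real.Gamma (1 + (d : ℝ) / 2) = ω := by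
    rw [hω, add_comm (1:ℝ) ((d:ℝ)/2)]
    congr 1
    rw [← Real.rpow_natCast (Real.sqrt Real.pi) d, Real.sqrt_eq_rpow,
      ← Real.rpow_mul Real.pi_pos.le]
    congr 1
    ring
  have hrp : r ^ (d + 2) = (m / ω) ^ (((d:ℝ) + 2) / d) := by
    rw [← Real.rpow_natCast r (d + 2), hr, ← Real.rpow_mul hmω.le]
    congr 1
    push_cast
    field_simp
  have e2 : ((d:ℝ) / ((d:ℝ) + 2)) * ω ^ (-(2:ℝ) / (d:ℝ)) * m ^ (((d:ℝ) + 2) / (d:ℝ))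
      = (d / ((d:ℝ) + 2)) * ω * r ^ (d + 2) := by
    rw [hrp, Real.div_rpow hmpos.le hωpos.le]
    have hexp : (-(2:ℝ) / (d:ℝ)) = 1 - ((d:ℝ) + 2) / d := by field_simp; ring
    rw [hexp, Real.rpow_sub hωpos, Real.rpow_one]
    ring
  calc ENNReal.ofReal (((d : ℝ) / ((d : ℝ) + 2)) *
        (Real.pi ^ ((d : ℝ) / 2) / Real.Gamma (1 + (d : ℝ) / 2)) ^ (-(2 : ℝ) / (d : ℝ)) *
        (volume Ω).toReal ^ (((d : ℝ) + 2) / (d : ℝ)))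
      = ENNReal.ofReal ((d / ((d:ℝ) + 2)) * ω * r ^ (d + 2)) := by rw [e1, ← hm, e2]
    _ = ∫⁻ z in B, f z := hcomp.symm
    _ ≤ ∫⁻ z in Ω, f z := hstep1
end

section
/- Let d ≥ 1 and let Ω ⊂ ℝ^d be a measurable set with 0 < |Ω| < ∞. Set β = 2(2π)^{−d} √(|Ω| · ∫_Ω |z|² dz). Then β ≥ (2π)^{−d} · ω_d^{−1/d} · |Ω|^{(d+1)/d}, where ω_d = π^{d/2}/Γ(1 + d/2) is the volume of the unit ball in ℝ^d. -/
open MeasureTheory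

open Real Set in
private lemma beta_aux (d : ℕ) (hd : 1 ≤ d)
    (Ω : Set (EuclideanSpace ℝ (Fin d)))
    (hΩmeas : MeasurableSet Ω) (hΩpos : 0 < volume Ω) (hΩfin : volume Ω < ⊤)
    (hΩI : IntegrableOn (fun z => ‖z‖ ^ 2) Ω volume)
    {m ω R : ℝ} (hm_def : m = (volume Ω).toReal)
    (hω_def : ω = Real.pi ^ ((d : ℝ) / 2) / Real.Gamma (1 + (d : ℝ) / 2))
    (hR_def : R = (m / ω) ^ ((1 : ℝ) / d)) :
    m * R ^ 2 * ((d : ℝ) / ((d : ℝ) + 2)) ≤ ∫ z in Ω, ‖z‖ ^ 2 := by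
  have hm : 0 < m := hm_def ▸ ENNReal.toReal_pos hΩpos.ne' hΩfin.ne
  have hωpos : 0 < ω := hω_def ▸ div_pos (Real.rpow_pos_of_pos Real.pi_pos _)
    (Real.Gamma_pos_of_pos (by positivity))
  have hd0 : (d : ℝ) ≠ 0 := Nat.cast_ne_zero.mpr (by omega)
  have hdpos : (0 : ℝ) < d := by exact_mod_cast Nat.pos_of_ne_zero (by omega)
  have hR : 0 < R := hR_def ▸ Real.rpow_pos_of_pos (div_pos hm hωpos) _
  have hRd : ω * R ^ (d : ℕ) = m := by
    rw [hR_def, ← Real.rpow_natCast ((m / ω) ^ ((1 : ℝ) / d)) d,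
        ← Real.rpow_mul (le_of_lt (div_pos hm hωpos)), one_div,
        inv_mul_cancel₀ hd0, Real.rpow_one, mul_div_cancel₀ _ (ne_of_gt hωpos)]
  haveI : Nonempty (Fin d) := ⟨⟨0, hd⟩⟩
  -- volume of closed balls
  have hball : ∀ s : ℝ, 0 ≤ s →
      volume (Metric.closedBall (0 : EuclideanSpace ℝ (Fin d)) s)
        = ENNReal.ofReal (ω * s ^ (d : ℕ)) := by
    intro s hs
    rw [EuclideanSpace.volume_closedBall, Fintype.card_fin,
        ← ENNReal.ofReal_pow hs, ← ENNReal.ofReal_mul (by positivity)]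
    congr 1
    have hsp : Real.sqrt π ^ d = π ^ ((d : ℝ) / 2) := by
      rw [Real.sqrt_eq_rpow, ← Real.rpow_natCast (π ^ ((1 : ℝ) / 2)) d,
          ← Real.rpow_mul Real.pi_pos.le]
      congr 1
      push_cast
      ring
    rw [hω_def, hsp, add_comm (1 : ℝ) ((d : ℝ) / 2)]
    ring
  -- pointwise measure bound
  have hSmeas : ∀ t : ℝ, MeasurableSet {z : EuclideanSpace ℝ (Fin d) | t < ‖z‖ ^ 2} :=
    fun t => measurableSet_lt measurable_const ((continuous_norm.pow 2).measurable)
  have hmeasbound : ∀ t : ℝ, 0 < t →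
      ENNReal.ofReal (m - ω * t ^ ((d : ℝ) / 2)) ≤
        volume ({z : EuclideanSpace ℝ (Fin d) | t < ‖z‖ ^ 2} ∩ Ω) := by
    intro t ht
    have hsqd : Real.sqrt t ^ (d : ℕ) = t ^ ((d : ℝ) / 2) := by
      rw [Real.sqrt_eq_rpow, ← Real.rpow_natCast (t ^ ((1 : ℝ) / 2)) d,
          ← Real.rpow_mul ht.le]
      congr 1
      push_cast
      ring
    have hsub : Ω ⊆ ({z : EuclideanSpace ℝ (Fin d) | t < ‖z‖ ^ 2} ∩ Ω)
        ∪ Metric.closedBall 0 (Real.sqrt t) := by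
      intro z hz
      by_cases h : t < ‖z‖ ^ 2
      · exact Or.inl ⟨h, hz⟩
      · refine Or.inr ?_
        rw [Metric.mem_closedBall, dist_zero_right]
        have h2 := Real.sqrt_le_sqrt (le_of_not_gt h)
        rwa [Real.sqrt_sq (norm_nonneg z)] at h2
    have h1 : volume Ω ≤ volume ({z : EuclideanSpace ℝ (Fin d) | t < ‖z‖ ^ 2} ∩ Ω)
        + ENNReal.ofReal (ω * t ^ ((d : ℝ) / 2)) := by
      calc volume Ω
          ≤ volume (({z : EuclideanSpace ℝ (Fin d) | t < ‖z‖ ^ 2} ∩ Ω)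
              ∪ Metric.closedBall 0 (Real.sqrt t)) := measure_mono hsub
        _ ≤ volume ({z : EuclideanSpace ℝ (Fin d) | t < ‖z‖ ^ 2} ∩ Ω)
              + volume (Metric.closedBall (0 : EuclideanSpace ℝ (Fin d)) (Real.sqrt t)) :=
            measure_union_le _ _
        _ = _ := by rw [hball _ (Real.sqrt_nonneg t), hsqd]
    have hvolΩ : volume Ω = ENNReal.ofReal m := by
      rw [hm_def, ENNReal.ofReal_toReal hΩfin.ne]
    rw [ENNReal.ofReal_sub _ (by positivity), ← hvolΩ]
    exact tsub_le_iff_right.mpr h1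
  -- integrability and nonnegativity of the layer function
  have hp : (-1 : ℝ) < (d : ℝ) / 2 := by linarith
  have hInt_rpow : IntegrableOn (fun t : ℝ => t ^ ((d : ℝ) / 2)) (Ioc 0 (R ^ 2)) volume := by
    have h := intervalIntegral.intervalIntegrable_rpow' (a := 0) (b := R ^ 2) hp
    rwa [intervalIntegrable_iff, uIoc_of_le (by positivity)] at h
  have hg_int : IntegrableOn (fun t : ℝ => m - ω * t ^ ((d : ℝ) / 2)) (Ioc 0 (R ^ 2)) volume :=
    ((integrableOn_const_iff (C := m)).mpr (Or.inr measure_Ioc_lt_top)).sub (hInt_rpow.const_mul ω)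
  have hR2d : ((R ^ 2 : ℝ)) ^ ((d : ℝ) / 2) = R ^ (d : ℕ) := by
    conv_lhs => rw [← Real.rpow_natCast R 2, ← Real.rpow_mul hR.le]
    rw [show ((2 : ℕ) : ℝ) * ((d : ℝ) / 2) = ((d : ℕ) : ℝ) by push_cast; ring,
        Real.rpow_natCast]
  have hR2d1 : ((R ^ 2 : ℝ)) ^ ((d : ℝ) / 2 + 1) = R ^ (d : ℕ) * R ^ 2 := by
    conv_lhs => rw [← Real.rpow_natCast R 2, ← Real.rpow_mul hR.le]
    rw [show ((2 : ℕ) : ℝ) * ((d : ℝ) / 2 + 1) = ((d + 2 : ℕ) : ℝ) by push_cast; ring,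
        Real.rpow_natCast, pow_add]
  have hg_nn : ∀ t ∈ Ioc (0 : ℝ) (R ^ 2), 0 ≤ m - ω * t ^ ((d : ℝ) / 2) := by
    intro t ht
    have h1 : t ^ ((d : ℝ) / 2) ≤ (R ^ 2 : ℝ) ^ ((d : ℝ) / 2) :=
      Real.rpow_le_rpow ht.1.le ht.2 (by positivity)
    rw [hR2d] at h1
    nlinarith [hωpos]
  -- value of the layer integral
  have hJ : ∫ t in Ioc (0 : ℝ) (R ^ 2), (m - ω * t ^ ((d : ℝ) / 2))
      = m * R ^ 2 * ((d : ℝ) / ((d : ℝ) + 2)) := by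
    rw [← intervalIntegral.integral_of_le (by positivity : (0:ℝ) ≤ R ^ 2),
        intervalIntegral.integral_sub intervalIntegrable_const
          ((intervalIntegral.intervalIntegrable_rpow' hp).const_mul ω),
        intervalIntegral.integral_const, intervalIntegral.integral_const_mul,
        integral_rpow (Or.inl hp)]
    rw [Real.zero_rpow (by positivity), hR2d1, smul_eq_mul, ← hRd]
    have h2 : (d : ℝ) / 2 + 1 ≠ 0 := by positivity
    have h3 : (d : ℝ) + 2 ≠ 0 := by positivity
    field_simp
    ring
  -- layer cake
  have hI_nn : 0 ≤ ∫ z in Ω, ‖z‖ ^ 2 :=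
    setIntegral_nonneg hΩmeas (fun z _ => sq_nonneg _)
  have hof : ENNReal.ofReal (∫ z in Ω, ‖z‖ ^ 2)
      = ∫⁻ z in Ω, ENNReal.ofReal (‖z‖ ^ 2) :=
    ofReal_integral_eq_lintegral_ofReal hΩI (ae_of_all _ fun z => sq_nonneg _)
  have hlayer : ∫⁻ z in Ω, ENNReal.ofReal (‖z‖ ^ 2)
      = ∫⁻ t in Ioi (0 : ℝ), (volume.restrict Ω) {z | t < ‖z‖ ^ 2} :=
    lintegral_eq_lintegral_meas_lt _ (ae_of_all _ fun z => sq_nonneg _)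
      ((continuous_norm.pow 2).measurable.aemeasurable)
  have hchain : ENNReal.ofReal (m * R ^ 2 * ((d : ℝ) / ((d : ℝ) + 2)))
      ≤ ENNReal.ofReal (∫ z in Ω, ‖z‖ ^ 2) := by
    rw [hof, hlayer]
    calc ENNReal.ofReal (m * R ^ 2 * ((d : ℝ) / ((d : ℝ) + 2)))
        = ∫⁻ t in Ioc (0 : ℝ) (R ^ 2), ENNReal.ofReal (m - ω * t ^ ((d : ℝ) / 2)) := by
          rw [← hJ, ofReal_integral_eq_lintegral_ofReal hg_int
            ((ae_restrict_iff' measurableSet_Ioc).mpr (ae_of_all _ hg_nn))]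
      _ ≤ ∫⁻ t in Ioc (0 : ℝ) (R ^ 2), (volume.restrict Ω) {z | t < ‖z‖ ^ 2} := by
          refine setLIntegral_mono' measurableSet_Ioc (fun t ht => ?_)
          rw [Measure.restrict_apply (hSmeas t)]
          exact hmeasbound t ht.1
      _ ≤ ∫⁻ t in Ioi (0 : ℝ), (volume.restrict Ω) {z | t < ‖z‖ ^ 2} :=
          lintegral_mono_set Ioc_subset_Ioi_self
  exact (ENNReal.ofReal_le_ofReal_iff hI_nn).mp hchain

/-- If `Ω ⊂ ℝ^d` is measurable with `0 < |Ω| < ∞`, then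
`β = 2(2π)^{−d}√(|Ω|·∫_Ω |z|² dz)` satisfies
`β ≥ (2π)^{−d}·ω_d^{−1/d}·|Ω|^{(d+1)/d}`, where `ω_d = π^{d/2}/Γ(1+d/2)` is the
volume of the unit ball in `ℝ^d`. -/
theorem beta_lower_bound (d : ℕ) (hd : 1 ≤ d)
    (Ω : Set (EuclideanSpace ℝ (Fin d)))
    (hΩmeas : MeasurableSet Ω) (hΩpos : 0 < volume Ω) (hΩfin : volume Ω < ⊤)
    (hΩI : IntegrableOn (fun z => ‖z‖ ^ 2) Ω volume)
    (β : ℝ)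
    (hβ : β = 2 * ((2 * Real.pi) ^ d)⁻¹ * Real.sqrt ((volume Ω).toReal * ∫ z in Ω, ‖z‖ ^ 2)) :
    ((2 * Real.pi) ^ d)⁻¹ *
        (Real.pi ^ ((d : ℝ) / 2) / Real.Gamma (1 + (d : ℝ) / 2)) ^ (-(1 : ℝ) / (d : ℝ)) *
        (volume Ω).toReal ^ (((d : ℝ) + 1) / (d : ℝ))
      ≤ β := by
  set m : ℝ := (volume Ω).toReal with hm_def
  set ω : ℝ := Real.pi ^ ((d : ℝ) / 2) / Real.Gamma (1 + (d : ℝ) / 2) with hω_def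
  set R : ℝ := (m / ω) ^ ((1 : ℝ) / d) with hR_def
  have hm : 0 < m := ENNReal.toReal_pos hΩpos.ne' hΩfin.ne
  have hωpos : 0 < ω := div_pos (Real.rpow_pos_of_pos Real.pi_pos _)
    (Real.Gamma_pos_of_pos (by positivity))
  have hd0 : (d : ℝ) ≠ 0 := Nat.cast_ne_zero.mpr (by omega)
  have hdpos : (0 : ℝ) < d := by exact_mod_cast Nat.pos_of_ne_zero (by omega)
  have hR : 0 < R := Real.rpow_pos_of_pos (div_pos hm hωpos) _
  have hkey : m * R ^ 2 * ((d : ℝ) / ((d : ℝ) + 2)) ≤ ∫ z in Ω, ‖z‖ ^ 2 :=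
    beta_aux d hd Ω hΩmeas hΩpos hΩfin hΩI hm_def hω_def hR_def
  have hI_nn : 0 ≤ ∫ z in Ω, ‖z‖ ^ 2 :=
    setIntegral_nonneg hΩmeas (fun z _ => sq_nonneg _)
  have hfrac : (1 : ℝ) / 4 ≤ (d : ℝ) / ((d : ℝ) + 2) := by
    rw [div_le_div_iff₀ (by norm_num) (by positivity)]
    have : (1 : ℝ) ≤ d := by exact_mod_cast hd
    linarith
  have hsqrt : m * R / 2 ≤ Real.sqrt (m * ∫ z in Ω, ‖z‖ ^ 2) := by
    rw [show m * R / 2 = Real.sqrt ((m * R / 2) ^ 2) from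
      (Real.sqrt_sq (by positivity)).symm]
    apply Real.sqrt_le_sqrt
    have h1 : m * (m * R ^ 2 * ((d : ℝ) / ((d : ℝ) + 2))) ≤ m * ∫ z in Ω, ‖z‖ ^ 2 :=
      mul_le_mul_of_nonneg_left hkey hm.le
    nlinarith [sq_nonneg (m * R), hm, hR]
  have hident : ω ^ (-(1 : ℝ) / (d : ℝ)) * m ^ (((d : ℝ) + 1) / (d : ℝ)) = m * R := by
    rw [hR_def, Real.div_rpow hm.le hωpos.le, neg_div, Real.rpow_neg hωpos.le,
        show ((d : ℝ) + 1) / (d : ℝ) = 1 + 1 / d by field_simp,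
        Real.rpow_add hm, Real.rpow_one]
    ring
  have hc : (0 : ℝ) ≤ ((2 * Real.pi) ^ d)⁻¹ := by positivity
  calc ((2 * Real.pi) ^ d)⁻¹ * ω ^ (-(1 : ℝ) / (d : ℝ)) * m ^ (((d : ℝ) + 1) / (d : ℝ))
      = ((2 * Real.pi) ^ d)⁻¹ * (m * R) := by rw [mul_assoc, hident]
    _ ≤ β := by
        rw [hβ]
        have h2 := mul_le_mul_of_nonneg_left hsqrt hc
        nlinarith [h2]
end

section
/- Let d ≥ 1 be a natural number and let θ : [0,∞) → [0,1] be a measurable function with ∫_0^∞ θ(a) da = 1. Then ∫_0^∞ a^d θ(a) da ≥ 1/(d+1). -/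
open MeasureTheory

/-- For `d ≥ 1` and measurable `θ : [0,∞) → [0,1]` with `∫_0^∞ θ(a) da = 1`,
one has `∫_0^∞ a^d θ(a) da ≥ 1/(d+1)` (the integral being allowed to be `+∞`). -/
theorem moment_lower_bound (d : ℕ) (hd : 1 ≤ d) (θ : ℝ → ℝ)
    (hmeas : Measurable θ) (h01 : ∀ a, 0 ≤ a → 0 ≤ θ a ∧ θ a ≤ 1)
    (hint : ∫ a in Set.Ioi (0 : ℝ), θ a = 1) :
    ENNReal.ofReal (1 / ((d : ℝ) + 1))
      ≤ ∫⁻ a in Set.Ioi (0 : ℝ), ENNReal.ofReal (a ^ d * θ a) := by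
  -- θ is integrable on Ioi 0
  have hθint : IntegrableOn θ (Set.Ioi (0:ℝ)) := by
    by_contra h
    rw [integral_undef h] at hint
    norm_num at hint
  have hsplit : Set.Ioi (0:ℝ) = Set.Ioc 0 1 ∪ Set.Ioi 1 :=
    (Set.Ioc_union_Ioi_eq_Ioi (by norm_num : (0:ℝ) ≤ 1)).symm
  have hpow : IntegrableOn (fun a : ℝ => a ^ d) (Set.Ioc 0 1) :=
    (continuous_pow d).integrableOn_Ioc
  have hdisj : Disjoint (Set.Ioc (0:ℝ) 1) (Set.Ioi 1) := by
    rw [Set.disjoint_left]; rintro x ⟨_, hx1⟩ hx; exact absurd hx (not_lt.2 hx1)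
  have hmeasIoc : MeasurableSet (Set.Ioc (0:ℝ) 1) := measurableSet_Ioc
  have hmeasIoi : MeasurableSet (Set.Ioi (1:ℝ)) := measurableSet_Ioi
  have hfmeas : Measurable (fun a : ℝ => a ^ d * θ a) := (measurable_id.pow_const d).mul hmeas
  -- integrability of a^d*θ on Ioc 0 1
  have hfint : IntegrableOn (fun a : ℝ => a ^ d * θ a) (Set.Ioc 0 1) := by
    apply Measure.integrableOn_of_bounded (M := 1) (by simp) hfmeas.aestronglyMeasurable
    filter_upwards [ae_restrict_mem hmeasIoc] with a ha
    obtain ⟨h0, h1⟩ := h01 a (le_of_lt ha.1)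
    rw [Real.norm_eq_abs, abs_of_nonneg (mul_nonneg (pow_nonneg (le_of_lt ha.1) d) h0)]
    calc a ^ d * θ a ≤ 1 * 1 := by
          apply mul_le_mul _ h1 h0 zero_le_one
          exact pow_le_one₀ (le_of_lt ha.1) ha.2
      _ = 1 := one_mul 1
  -- real integral computations
  have hI1 : ∫ a in Set.Ioc (0:ℝ) 1, a ^ d = 1 / ((d:ℝ) + 1) := by
    rw [← intervalIntegral.integral_of_le (by norm_num : (0:ℝ) ≤ 1)]
    simp [integral_pow]
  have hθsum : (∫ a in Set.Ioc (0:ℝ) 1, θ a) + (∫ a in Set.Ioi (1:ℝ), θ a) = 1 := by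
    rw [← setIntegral_union hdisj hmeasIoi (hθint.mono_set (by rw [hsplit]; exact Set.subset_union_left))
        (hθint.mono_set (by rw [hsplit]; exact Set.subset_union_right)), ← hsplit, hint]
  -- key pointwise bound on Ioc 0 1 : a^d*θ ≥ a^d - 1 + θ
  have hI1ge : (∫ a in Set.Ioc (0:ℝ) 1, a ^ d * θ a)
      ≥ 1 / ((d:ℝ) + 1) - 1 + ∫ a in Set.Ioc (0:ℝ) 1, θ a := by
    have h1 : IntegrableOn (fun a : ℝ => a ^ d - 1 + θ a) (Set.Ioc 0 1) := by
      apply Integrable.add _ (hθint.mono_set (by rw [hsplit]; exact Set.subset_union_left))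
      exact hpow.sub (integrable_const 1)
    have hsub : IntegrableOn (fun a : ℝ => a ^ d - 1) (Set.Ioc 0 1) :=
      hpow.sub (integrable_const 1)
    have h2 : (∫ a in Set.Ioc (0:ℝ) 1, (a ^ d - 1 + θ a))
        = 1 / ((d:ℝ) + 1) - 1 + ∫ a in Set.Ioc (0:ℝ) 1, θ a := by
      rw [integral_add hsub
        (hθint.mono_set (by rw [hsplit]; exact Set.subset_union_left)),
        integral_sub hpow (integrable_const 1), hI1]
      simp [Real.volume_Ioc]
    rw [← h2]
    apply setIntegral_mono_on h1 hfint hmeasIoc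
    intro a ha
    obtain ⟨h0, hle1⟩ := h01 a (le_of_lt ha.1)
    nlinarith [pow_le_one₀ (le_of_lt ha.1) ha.2 (n := d), pow_nonneg (le_of_lt ha.1) d]
  -- nonnegativity
  have hθIoi_nonneg : 0 ≤ ∫ a in Set.Ioi (1:ℝ), θ a := by
    apply setIntegral_nonneg hmeasIoi
    intro a ha; exact (h01 a (by linarith [Set.mem_Ioi.1 ha])).1
  -- lintegral over Ioc 0 1 equals ofReal of real integral
  have hL1 : (∫⁻ a in Set.Ioc (0:ℝ) 1, ENNReal.ofReal (a ^ d * θ a))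
      = ENNReal.ofReal (∫ a in Set.Ioc (0:ℝ) 1, a ^ d * θ a) := by
    rw [← ofReal_integral_eq_lintegral_ofReal hfint]
    filter_upwards [ae_restrict_mem hmeasIoc] with a ha
    exact mul_nonneg (pow_nonneg (le_of_lt ha.1) d) (h01 a (le_of_lt ha.1)).1
  -- lintegral over Ioi 1 bounded below
  have hL2 : ENNReal.ofReal (∫ a in Set.Ioi (1:ℝ), θ a)
      ≤ ∫⁻ a in Set.Ioi (1:ℝ), ENNReal.ofReal (a ^ d * θ a) := by
    have hθint1 : IntegrableOn θ (Set.Ioi 1) :=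
      hθint.mono_set (by rw [hsplit]; exact Set.subset_union_right)
    rw [ofReal_integral_eq_lintegral_ofReal hθint1 (by
      filter_upwards [ae_restrict_mem hmeasIoi] with a ha
      exact (h01 a (by linarith [Set.mem_Ioi.1 ha])).1)]
    apply lintegral_mono_ae
    filter_upwards [ae_restrict_mem hmeasIoi] with a ha
    apply ENNReal.ofReal_le_ofReal
    have ha1 : (1:ℝ) < a := ha
    have h0 := (h01 a (by linarith)).1
    nlinarith [one_le_pow₀ (le_of_lt ha1) (n := d)]
  calc ENNReal.ofReal (1 / ((d : ℝ) + 1))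
      ≤ ENNReal.ofReal ((∫ a in Set.Ioc (0:ℝ) 1, a ^ d * θ a) + ∫ a in Set.Ioi (1:ℝ), θ a) := by
        apply ENNReal.ofReal_le_ofReal; linarith [hI1ge, hθsum]
    _ ≤ ENNReal.ofReal (∫ a in Set.Ioc (0:ℝ) 1, a ^ d * θ a)
        + ENNReal.ofReal (∫ a in Set.Ioi (1:ℝ), θ a) := ENNReal.ofReal_add_le
    _ ≤ (∫⁻ a in Set.Ioc (0:ℝ) 1, ENNReal.ofReal (a ^ d * θ a))
        + ∫⁻ a in Set.Ioi (1:ℝ), ENNReal.ofReal (a ^ d * θ a) := by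
        rw [hL1]; exact add_le_add le_rfl hL2
    _ = ∫⁻ a in Set.Ioi (0:ℝ), ENNReal.ofReal (a ^ d * θ a) := by
        rw [hsplit, lintegral_union hmeasIoi hdisj]
end

section
/- Let d ≥ 1 be a natural number and let θ : [0,∞) → [0,1] be a measurable function with ∫_0^∞ θ(a) da = 1 and ∫_0^∞ a^d θ(a) da < ∞. Then there exists τ ≥ 0 such that ∫_τ^{τ+1} a^d da = ∫_0^∞ a^d θ(a) da, i.e. ((τ+1)^{d+1} − τ^{d+1})/(d+1) = ∫_0^∞ a^d θ(a) da. -/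
open MeasureTheory

/-- For `d ≥ 1` and measurable `θ : [0,∞) → [0,1]` with `∫_0^∞ θ(a) da = 1` and
`∫_0^∞ a^d θ(a) da < ∞`, there exists `τ ≥ 0` with
`∫_τ^{τ+1} a^d da = ∫_0^∞ a^d θ(a) da`, i.e.
`((τ+1)^{d+1} − τ^{d+1})/(d+1) = ∫_0^∞ a^d θ(a) da`. -/
theorem exists_tau (d : ℕ) (hd : 1 ≤ d) (θ : ℝ → ℝ)
    (hmeas : Measurable θ) (h01 : ∀ a, 0 ≤ a → 0 ≤ θ a ∧ θ a ≤ 1)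
    (hint : ∫ a in Set.Ioi (0 : ℝ), θ a = 1)
    (hfin : IntegrableOn (fun a => a ^ d * θ a) (Set.Ioi 0)) :
    ∃ τ : ℝ, 0 ≤ τ ∧
      (∫ a in τ..(τ + 1), a ^ d) = (∫ a in Set.Ioi (0 : ℝ), a ^ d * θ a) ∧
      ((τ + 1) ^ (d + 1) - τ ^ (d + 1)) / ((d : ℝ) + 1)
        = ∫ a in Set.Ioi (0 : ℝ), a ^ d * θ a := by
  set M : ℝ := ∫ a in Set.Ioi (0 : ℝ), a ^ d * θ a with hM
  -- θ is integrable on Ioi 0 (its integral is nonzero)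
  have hθint : IntegrableOn θ (Set.Ioi (0:ℝ)) := by
    by_contra h
    rw [MeasureTheory.integral_undef h] at hint
    norm_num at hint
  -- interval integral of a^d
  have hpow : ∀ τ : ℝ, (∫ a in τ..(τ + 1), a ^ d)
      = ((τ + 1) ^ (d + 1) - τ ^ (d + 1)) / ((d : ℝ) + 1) := by
    intro τ
    rw [integral_pow]
    all_goals (push_cast; ring)
  -- split Ioi 0 = Ioc 0 1 ∪ Ioi 1
  have hsplit : Set.Ioc (0:ℝ) 1 ∪ Set.Ioi (1:ℝ) = Set.Ioi (0:ℝ) :=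
    Set.Ioc_union_Ioi_eq_Ioi (by norm_num)
  have hdisj : Disjoint (Set.Ioc (0:ℝ) 1) (Set.Ioi (1:ℝ)) :=
    Set.Ioc_disjoint_Ioi le_rfl
  have hθ1 : IntegrableOn θ (Set.Ioc (0:ℝ) 1) :=
    hθint.mono_set (by rw [← hsplit]; exact Set.subset_union_left)
  have hθ2 : IntegrableOn θ (Set.Ioi (1:ℝ)) :=
    hθint.mono_set (by rw [← hsplit]; exact Set.subset_union_right)
  have hf1 : IntegrableOn (fun a => a ^ d * θ a) (Set.Ioc (0:ℝ) 1) :=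
    hfin.mono_set (by rw [← hsplit]; exact Set.subset_union_left)
  have hf2 : IntegrableOn (fun a => a ^ d * θ a) (Set.Ioi (1:ℝ)) :=
    hfin.mono_set (by rw [← hsplit]; exact Set.subset_union_right)
  have hpowint : IntegrableOn (fun a : ℝ => a ^ d) (Set.Ioc (0:ℝ) 1) := by
    have := (intervalIntegral.intervalIntegrable_pow (μ := volume) (a := (0:ℝ)) (b := 1) d)
    rwa [intervalIntegrable_iff_integrableOn_Ioc_of_le (by norm_num)] at this
  -- ∫_{Ioc 0 1} a^d = 1/(d+1)
  have hIpow : (∫ a in Set.Ioc (0:ℝ) 1, a ^ d) = 1 / ((d:ℝ) + 1) := by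
    rw [← intervalIntegral.integral_of_le (by norm_num : (0:ℝ) ≤ 1), integral_pow]
    push_cast
    norm_num
  -- θ integral splits
  have hθsum : (∫ a in Set.Ioc (0:ℝ) 1, θ a) + (∫ a in Set.Ioi (1:ℝ), θ a) = 1 := by
    rw [← MeasureTheory.setIntegral_union hdisj measurableSet_Ioi hθ1 hθ2, hsplit, hint]
  -- M splits
  have hMsum : M = (∫ a in Set.Ioc (0:ℝ) 1, a ^ d * θ a)
      + (∫ a in Set.Ioi (1:ℝ), a ^ d * θ a) := by
    rw [hM, ← MeasureTheory.setIntegral_union hdisj measurableSet_Ioi hf1 hf2, hsplit]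
  -- lower bound on the first piece
  have hlb1 : (∫ a in Set.Ioc (0:ℝ) 1, a ^ d + θ a - 1)
      ≤ ∫ a in Set.Ioc (0:ℝ) 1, a ^ d * θ a := by
    apply MeasureTheory.setIntegral_mono_on
    · exact (hpowint.add hθ1).sub (integrableOn_const (by simp))
    · exact hf1
    · exact measurableSet_Ioc
    · intro a ha
      have ha0 : (0:ℝ) ≤ a := le_of_lt ha.1
      obtain ⟨hθ0, hθle⟩ := h01 a ha0
      have hapow : a ^ d ≤ 1 := pow_le_one₀ ha0 ha.2
      nlinarith
  have hlb1' : (∫ a in Set.Ioc (0:ℝ) 1, a ^ d + θ a - 1)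
      = 1 / ((d:ℝ) + 1) + (∫ a in Set.Ioc (0:ℝ) 1, θ a) - (volume (Set.Ioc (0:ℝ) 1)).toReal := by
    have h1 : (∫ a in Set.Ioc (0:ℝ) 1, (a ^ d + θ a - 1))
        = (∫ a in Set.Ioc (0:ℝ) 1, (a ^ d + θ a)) - ∫ _a in Set.Ioc (0:ℝ) 1, (1:ℝ) := by
      exact MeasureTheory.integral_sub (hpowint.add hθ1)
        (integrableOn_const (by simp))
    have h2 : (∫ a in Set.Ioc (0:ℝ) 1, (a ^ d + θ a))
        = (∫ a in Set.Ioc (0:ℝ) 1, a ^ d) + ∫ a in Set.Ioc (0:ℝ) 1, θ a :=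
      MeasureTheory.integral_add hpowint hθ1
    rw [h1, h2, hIpow, MeasureTheory.setIntegral_const]
    simp
  -- lower bound on the second piece
  have hlb2 : (∫ a in Set.Ioi (1:ℝ), θ a) ≤ ∫ a in Set.Ioi (1:ℝ), a ^ d * θ a := by
    apply MeasureTheory.setIntegral_mono_on hθ2 hf2 measurableSet_Ioi
    intro a ha
    have ha1 : (1:ℝ) ≤ a := le_of_lt ha
    obtain ⟨hθ0, _⟩ := h01 a (by linarith)
    have : (1:ℝ) ≤ a ^ d := one_le_pow₀ ha1
    nlinarith
  have hMlb : 1 / ((d:ℝ) + 1) ≤ M := by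
    have hvol : (volume (Set.Ioc (0:ℝ) 1)).toReal = 1 := by simp
    rw [hlb1', hvol] at hlb1
    linarith [hMsum, hθsum, hlb1, hlb2]
  -- the function γ
  set g : ℝ → ℝ := fun τ => ((τ + 1) ^ (d + 1) - τ ^ (d + 1)) / ((d : ℝ) + 1) with hg
  have hgcont : Continuous g := by fun_prop
  have hg0 : g 0 = 1 / ((d:ℝ) + 1) := by simp [hg]
  set T : ℝ := max M 1 with hT
  have hT1 : (1:ℝ) ≤ T := le_max_right _ _
  have hT0 : (0:ℝ) ≤ T := by linarith
  have hgT : M ≤ g T := by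
    have h1 : T ^ d ≤ ∫ a in T..(T + 1), a ^ d := by
      have : ∫ a in T..(T + 1), (T:ℝ) ^ d = T ^ d := by
        rw [intervalIntegral.integral_const]
        simp
      rw [← this]
      apply intervalIntegral.integral_mono_on (by linarith) intervalIntegrable_const
        (intervalIntegral.intervalIntegrable_pow d)
      intro x hx
      exact pow_le_pow_left₀ hT0 hx.1 d
    have h2 : T ≤ T ^ d := le_self_pow₀ hT1 (by omega)
    have h3 : M ≤ T := le_max_left _ _
    calc M ≤ T ^ d := le_trans h3 h2
    _ ≤ ∫ a in T..(T + 1), a ^ d := h1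
    _ = g T := hpow T
  obtain ⟨τ, hτmem, hτeq⟩ := intermediate_value_Icc hT0 hgcont.continuousOn
    (Set.mem_Icc.2 ⟨hg0 ▸ hMlb, hgT⟩)
  refine ⟨τ, hτmem.1, ?_, ?_⟩
  · rw [hpow τ]; exact hτeq
  · exact hτeq
end

section
/- Let d ≥ 1 be a natural number, let α > 0 be a real number, and let θ : [0,∞) → [0,1] be a measurable function with ∫_0^∞ θ(a) da = 1. Suppose τ ≥ 0 satisfies ∫_τ^{τ+1} a^d da = ∫_0^∞ a^d θ(a) da < ∞. Then ∫_τ^{τ+1} a^{α+d} da ≤ ∫_0^∞ a^{α+d} θ(a) da. -/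
open MeasureTheory

lemma stef_sign (d : ℕ) (hd : 1 ≤ d) (α : ℝ) (hα : 0 < α) (τ : ℝ) (hτ : 0 ≤ τ)
    (c1 c0 : ℝ)
    (hc1 : c1 * ((τ+1)^d - τ^d) = (τ+1) ^ (α + (d:ℝ)) - τ ^ (α + (d:ℝ)))
    (hc0 : c0 = τ ^ (α + (d:ℝ)) - c1 * τ^d) (a : ℝ) (ha : 0 ≤ a) :
    (a ≤ τ → 0 ≤ a ^ (α+(d:ℝ)) - c1 * a^d - c0) ∧
    (τ ≤ a → a ≤ τ+1 → a ^ (α+(d:ℝ)) - c1 * a^d - c0 ≤ 0) ∧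
    (τ+1 ≤ a → 0 ≤ a ^ (α+(d:ℝ)) - c1 * a^d - c0) := by
  have hdpos : (0:ℝ) < d := by exact_mod_cast hd
  set p : ℝ := (α + d) / d with hp
  have hp1 : 1 ≤ p := by rw [hp, le_div_iff₀ hdpos]; linarith
  have hψ : ConvexOn ℝ (Set.Ici 0) fun x : ℝ => x ^ p := convexOn_rpow hp1
  have key : ∀ x : ℝ, 0 ≤ x → (x^d : ℝ) ^ p = x ^ (α + (d:ℝ)) := by
    intro x hx
    rw [← Real.rpow_natCast x d, ← Real.rpow_mul hx]
    congr 1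
    rw [hp]
    field_simp
  have ht01 : (τ:ℝ)^d < (τ+1)^d := pow_lt_pow_left₀ (by linarith) hτ (by omega)
  have ht0m : (τ:ℝ)^d ∈ Set.Ici (0:ℝ) := Set.mem_Ici.mpr (pow_nonneg hτ d)
  have ht1m : ((τ+1):ℝ)^d ∈ Set.Ici (0:ℝ) := Set.mem_Ici.mpr (pow_nonneg (by linarith) d)
  have htm : (a:ℝ)^d ∈ Set.Ici (0:ℝ) := Set.mem_Ici.mpr (pow_nonneg ha d)
  have hc1' : c1 * ((τ+1)^d - τ^d) = (((τ+1):ℝ)^d) ^ p - ((τ:ℝ)^d) ^ p := by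
    rw [key τ hτ, key (τ+1) (by linarith)]; exact hc1
  rw [← key a ha, hc0, ← key τ hτ]
  refine ⟨?_, ?_, ?_⟩
  · intro h1
    have htle : (a:ℝ)^d ≤ τ^d := pow_le_pow_left₀ ha h1 d
    rcases eq_or_lt_of_le htle with he | hlt
    · rw [he]; linarith
    · have hs := hψ.slope_mono_adjacent htm ht1m hlt ht01
      have h2 : ((τ:ℝ)^d) ^ p - ((a:ℝ)^d) ^ p ≤ c1 * (τ^d - a^d) := by
        have hpos : (0:ℝ) < τ^d - a^d := by linarith
        have := (div_le_div_iff₀ hpos (by linarith : (0:ℝ) < (τ+1)^d - τ^d)).mp hs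
        nlinarith [hc1']
      linarith
  · intro h1 h2
    have ht0le : (τ:ℝ)^d ≤ a^d := pow_le_pow_left₀ hτ h1 d
    have htle1 : (a:ℝ)^d ≤ (τ+1)^d := pow_le_pow_left₀ ha h2 d
    rcases eq_or_lt_of_le ht0le with he | hlt0
    · rw [← he]; linarith
    · rcases eq_or_lt_of_le htle1 with he1 | hlt1
      · rw [he1]; nlinarith [hc1']
      · have aux := hψ.secant_mono_aux1 ht0m ht1m hlt0 hlt1
        have e : c1 * (a^d - τ^d) * ((τ+1)^d - τ^d)
            = ((a:ℝ)^d - τ^d) * ((((τ+1):ℝ)^d) ^ p - ((τ:ℝ)^d) ^ p) := by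
          linear_combination (a^d - τ^d : ℝ) * hc1'
        nlinarith [aux, e, ht01]
  · intro h1
    have ht1le : ((τ+1):ℝ)^d ≤ a^d := pow_le_pow_left₀ (by linarith) h1 d
    rcases eq_or_lt_of_le ht1le with he | hlt
    · rw [← he]; nlinarith [hc1']
    · have aux := hψ.secant_mono_aux2 ht0m htm ht01 hlt
      have hpos : (0:ℝ) < a^d - τ^d := by linarith
      have h2 : c1 * (a^d - τ^d) ≤ ((a:ℝ)^d) ^ p - ((τ:ℝ)^d) ^ p := by
        have := (div_le_div_iff₀ (by linarith : (0:ℝ) < (τ+1)^d - τ^d) hpos).mp aux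
        nlinarith [hc1']
      linarith

/-- Steffensen-type comparison: for `d ≥ 1`, `α > 0`, measurable `θ : [0,∞) → [0,1]`
with `∫_0^∞ θ(a) da = 1`, if `τ ≥ 0` satisfies
`∫_τ^{τ+1} a^d da = ∫_0^∞ a^d θ(a) da < ∞`, then
`∫_τ^{τ+1} a^{α+d} da ≤ ∫_0^∞ a^{α+d} θ(a) da` (the right side may be `+∞`). -/
theorem steffensen_comparison (d : ℕ) (hd : 1 ≤ d) (α : ℝ) (hα : 0 < α)
    (θ : ℝ → ℝ) (hmeas : Measurable θ)
    (h01 : ∀ a, 0 ≤ a → 0 ≤ θ a ∧ θ a ≤ 1)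
    (hint : ∫ a in Set.Ioi (0 : ℝ), θ a = 1)
    (hfin : IntegrableOn (fun a => a ^ d * θ a) (Set.Ioi 0))
    (τ : ℝ) (hτ : 0 ≤ τ)
    (hτeq : (∫ a in τ..(τ + 1), a ^ d) = ∫ a in Set.Ioi (0 : ℝ), a ^ d * θ a) :
    ENNReal.ofReal (∫ a in τ..(τ + 1), a ^ (α + (d : ℝ)))
      ≤ ∫⁻ a in Set.Ioi (0 : ℝ), ENNReal.ofReal (a ^ (α + (d : ℝ)) * θ a) := by
  by_cases htop : (∫⁻ a in Set.Ioi (0 : ℝ), ENNReal.ofReal (a ^ (α + (d : ℝ)) * θ a)) = ⊤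
  · rw [htop]; exact le_top
  set q : ℝ := α + (d:ℝ) with hq
  have hd1 : (1:ℝ) ≤ d := by exact_mod_cast hd
  have hqpos : 0 < q := by rw [hq]; linarith
  have hcontq : Continuous fun a : ℝ => a ^ q :=
    continuous_iff_continuousAt.mpr fun x =>
      Real.continuousAt_rpow_const x q (Or.inr hqpos.le)
  have hmeasfθ : Measurable fun a : ℝ => a ^ q * θ a := (hcontq.measurable).mul hmeas
  have hae : 0 ≤ᵐ[volume.restrict (Set.Ioi (0:ℝ))] fun a => a ^ q * θ a := by
    refine (ae_restrict_iff' measurableSet_Ioi).mpr (ae_of_all _ fun a ha => ?_)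
    exact mul_nonneg (Real.rpow_nonneg (le_of_lt ha) q) (h01 a (le_of_lt ha)).1
  have hIfθ : IntegrableOn (fun a => a ^ q * θ a) (Set.Ioi 0) := by
    refine ⟨hmeasfθ.aestronglyMeasurable, ?_⟩
    rw [hasFiniteIntegral_iff_ofReal hae]
    exact lt_top_iff_ne_top.mpr htop
  have hθint : IntegrableOn θ (Set.Ioi (0:ℝ)) := by
    by_contra hn
    rw [integral_undef hn] at hint
    norm_num at hint
  have hdenne : ((τ+1):ℝ)^d - τ^d ≠ 0 := by
    have : (τ:ℝ)^d < (τ+1)^d := pow_lt_pow_left₀ (by linarith) hτ (by omega)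
    linarith
  set c1 : ℝ := (((τ+1):ℝ) ^ q - τ ^ q) / (((τ+1):ℝ)^d - τ^d) with hc1def
  set c0 : ℝ := τ ^ q - c1 * τ^d with hc0def
  have hc1 : c1 * ((τ+1)^d - τ^d) = (τ+1) ^ q - τ ^ q := by
    rw [hc1def]; field_simp
  have hsign := fun (a : ℝ) (ha : 0 ≤ a) =>
    stef_sign d hd α hα τ hτ c1 c0 hc1 hc0def a ha
  have h1le : τ ≤ τ + 1 := by linarith
  set h : ℝ → ℝ := fun a => a ^ q - c1 * a^d - c0 with hhdef
  have hconth : Continuous h := by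
    rw [hhdef]
    exact (hcontq.sub (continuous_const.mul (continuous_pow d))).sub continuous_const
  -- integrability of h * θ on Ioi 0
  have hhθeq : (fun a : ℝ => h a * θ a)
      = fun a => a ^ q * θ a - c1 * (a^d * θ a) - c0 * θ a := by
    funext a; simp only [hhdef]; ring
  have hIhθ : IntegrableOn (fun a => h a * θ a) (Set.Ioi 0) := by
    rw [hhθeq]; exact (hIfθ.sub (hfin.const_mul c1)).sub (hθint.const_mul c0)
  -- value of ∫ hθ over Ioi 0
  have hval : ∫ a in Set.Ioi (0:ℝ), h a * θ a
      = (∫ a in Set.Ioi (0:ℝ), a ^ q * θ a) - c1 * (∫ a in τ..(τ+1), (a:ℝ)^d) - c0 := by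
    have hintsub : Integrable (fun a => a ^ q * θ a - c1 * (a^d * θ a))
        (volume.restrict (Set.Ioi 0)) := hIfθ.sub (hfin.const_mul c1)
    rw [hhθeq, integral_sub hintsub (hθint.const_mul c0),
      integral_sub hIfθ (hfin.const_mul c1), integral_const_mul, integral_const_mul,
      hint, hτeq]
    ring
  -- split : ∫ over Ioi 0 ≥ ∫ over Ioc τ (τ+1)
  have hsub : Set.Ioc τ (τ+1) ⊆ Set.Ioi (0:ℝ) := fun x hx => lt_of_le_of_lt hτ hx.1
  have hsplit : Set.Ioi (0:ℝ) = Set.Ioc τ (τ+1) ∪ (Set.Ioi (0:ℝ) \ Set.Ioc τ (τ+1)) :=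
    (Set.union_diff_cancel hsub).symm
  have hge1 : ∫ a in Set.Ioc τ (τ+1), h a * θ a ≤ ∫ a in Set.Ioi (0:ℝ), h a * θ a := by
    rw [hsplit, setIntegral_union Set.disjoint_sdiff_right
      (measurableSet_Ioi.diff measurableSet_Ioc)
      (hIhθ.mono_set hsub) (hIhθ.mono_set Set.diff_subset)]
    have : 0 ≤ ∫ a in Set.Ioi (0:ℝ) \ Set.Ioc τ (τ+1), h a * θ a := by
      refine setIntegral_nonneg (measurableSet_Ioi.diff measurableSet_Ioc) fun a ha => ?_
      have ha0 : 0 ≤ a := le_of_lt ha.1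
      have hnot := ha.2
      rw [Set.mem_Ioc, not_and_or, not_lt, not_le] at hnot
      have hh : 0 ≤ h a := by
        rcases hnot with hle | hgt
        · exact (hsign a ha0).1 hle
        · exact (hsign a ha0).2.2 (le_of_lt hgt)
      exact mul_nonneg hh (h01 a ha0).1
    linarith
  -- on Ioc, h ≤ h * θ
  have hge2 : ∫ a in Set.Ioc τ (τ+1), h a ≤ ∫ a in Set.Ioc τ (τ+1), h a * θ a := by
    refine setIntegral_mono_on (hconth.integrableOn_Ioc)
      (hIhθ.mono_set hsub) measurableSet_Ioc fun a ha => ?_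
    have ha0 : 0 ≤ a := le_trans hτ (le_of_lt ha.1)
    have hh : h a ≤ 0 := (hsign a ha0).2.1 (le_of_lt ha.1) ha.2
    nlinarith [(h01 a ha0).2, (h01 a ha0).1]
  -- value of ∫ h over Ioc
  have hIoc : ∫ a in Set.Ioc τ (τ+1), h a
      = (∫ a in τ..(τ+1), a ^ q) - c1 * (∫ a in τ..(τ+1), (a:ℝ)^d) - c0 := by
    rw [← intervalIntegral.integral_of_le h1le]
    have i1 : IntervalIntegrable (fun a : ℝ => a ^ q) volume τ (τ+1) :=
      hcontq.intervalIntegrable τ (τ+1)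
    have i2 : IntervalIntegrable (fun a : ℝ => c1 * a^d) volume τ (τ+1) :=
      (continuous_const.mul (continuous_pow d)).intervalIntegrable τ (τ+1)
    have i3 : IntervalIntegrable (fun _ : ℝ => c0) volume τ (τ+1) :=
      intervalIntegrable_const
    have : ∫ a in τ..(τ+1), h a = ∫ a in τ..(τ+1), (a ^ q - c1 * a^d - c0) := rfl
    rw [this, intervalIntegral.integral_sub (i1.sub i2) i3,
      intervalIntegral.integral_sub i1 i2, intervalIntegral.integral_const_mul,
      intervalIntegral.integral_const]
    simp
  -- combine
  have hreal : (∫ a in τ..(τ+1), a ^ q) ≤ ∫ a in Set.Ioi (0:ℝ), a ^ q * θ a := by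
    linarith [hge1, hge2, hval, hIoc]
  rw [← ofReal_integral_eq_lintegral_ofReal hIfθ hae]
  exact ENNReal.ofReal_le_ofReal hreal
end
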